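/- arXiv:2105.06531 — 7 statements merged into one kernel-verified Lean document; each statement's English description precedes it below -/
import Mathlib

section
/- Let D = (D_1, ..., D_n) be a diagram, i.e., a sequence of finite subsets of {1,...,n}. Define rank(D) = sum over columns j and elements i in D_j of the number of k with 1 ≤ k ≤ i and k ∉ D_j. If D consists of a single nonempty column D_1 = {a_1 < ... < a_m} with rank(D) > 0, then there exists a column C_1 with C_1 ≤ D_1 (meaning the k-th least element of C_1 is at most the k-th least element of D_1 for each k, and |C_1| = |D_1|) and rank((C_1)) = rank((D_1)) - 1. -/
open Finset

/-- `colLE R S`: `R ≤ S` for columns, i.e. `|R| = |S|` and the `k`-th least element of `R`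
does not exceed the `k`-th least element of `S` for each `k`. -/
def colLE {α : Type*} [LinearOrder α] (R S : Finset α) : Prop :=
  R.card = S.card ∧
  ∀ (k : ℕ) (hR : k < (R.sort (· ≤ ·)).length) (hS : k < (S.sort (· ≤ ·)).length),
    (R.sort (· ≤ ·)).get ⟨k, hR⟩ ≤ (S.sort (· ≤ ·)).get ⟨k, hS⟩

/-- Rank of a single column `S ⊆ [n] = {1,…,n}`:
`Σ_{i ∈ S} #{k : 1 ≤ k ≤ i, k ∉ S}`. -/
def colRank (S : Finset ℕ) : ℕ :=
  ∑ i ∈ S, ((Finset.Icc 1 i).filter (fun k => k ∉ S)).card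

/-- If `D₁ ⊆ [n]` is a single nonempty column of positive rank, there is a column
`C₁ ≤ D₁` with `rank((C₁)) = rank((D₁)) − 1`. -/
theorem stmt_0 (n : ℕ) (D1 : Finset ℕ) (hsub : D1 ⊆ Finset.Icc 1 n)
    (hne : D1.Nonempty) (hr : 0 < colRank D1) :
    ∃ C1 : Finset ℕ, C1 ⊆ Finset.Icc 1 n ∧ colLE C1 D1 ∧
      colRank C1 = colRank D1 - 1 := by
  classical
  -- extract j ∈ D1 and k ≤ j with k ∉ D1
  obtain ⟨j, hjD, hjpos⟩ : ∃ j ∈ D1, 0 < ((Finset.Icc 1 j).filter (fun k => k ∉ D1)).card := by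
    by_contra h
    push_neg at h
    have : colRank D1 = 0 :=
      Finset.sum_eq_zero (fun j hj => Nat.le_antisymm (h j hj) (Nat.zero_le _))
    omega
  obtain ⟨k, hk⟩ := Finset.card_pos.mp hjpos
  simp only [Finset.mem_filter, Finset.mem_Icc] at hk
  obtain ⟨⟨hk1, hkj⟩, hkD⟩ := hk
  have hkj' : k < j := lt_of_le_of_ne hkj (fun h => hkD (h ▸ hjD))
  set T := D1.filter (fun x => k < x) with hT
  have hTne : T.Nonempty := ⟨j, Finset.mem_filter.mpr ⟨hjD, hkj'⟩⟩
  set i := T.min' hTne with hi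
  have hiT : i ∈ T := T.min'_mem hTne
  have hiD : i ∈ D1 := (Finset.mem_filter.mp hiT).1
  have hki : k < i := (Finset.mem_filter.mp hiT).2
  have hi2 : 2 ≤ i := by omega
  have hin : i ≤ n := (Finset.mem_Icc.mp (hsub hiD)).2
  have hvD : i - 1 ∉ D1 := by
    intro hv
    rcases Nat.lt_or_ge k (i - 1) with h | h
    · have hmm : i - 1 ∈ T := Finset.mem_filter.mpr ⟨hv, h⟩
      have := T.min'_le _ hmm
      omega
    · have hkv : k = i - 1 := by omega
      exact hkD (hkv ▸ hv)
  set v := i - 1 with hv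
  have hvi : v < i := by omega
  have hv1 : 1 ≤ v := by omega
  -- all elements of D1 below i are below v
  have hP : ∀ x ∈ D1, x < i → x < v := by
    intro x hx hxi
    have : x ≠ v := fun h => hvD (h ▸ hx)
    omega
  set C1 := insert v (D1.erase i) with hC1
  have hvE : v ∉ D1.erase i := fun h => hvD (Finset.mem_of_mem_erase h)
  have card_eq : C1.card = D1.card := by
    rw [hC1, Finset.card_insert_of_notMem hvE, Finset.card_erase_of_mem hiD]
    have := Finset.card_pos.mpr hne
    omega
  have hmem : ∀ x, x ∈ C1 ↔ x = v ∨ (x ∈ D1 ∧ x ≠ i) := by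
    intro x
    simp only [hC1, Finset.mem_insert, Finset.mem_erase]
    tauto
  have hsubC : C1 ⊆ Finset.Icc 1 n := by
    intro x hx
    rcases (hmem x).mp hx with rfl | ⟨hx1, _⟩
    · exact Finset.mem_Icc.mpr ⟨hv1, by omega⟩
    · exact hsub hx1
  -- rank computation
  have claim1 : ∀ j ∈ D1.erase i,
      ((Finset.Icc 1 j).filter (fun k => k ∉ C1)).card
        = ((Finset.Icc 1 j).filter (fun k => k ∉ D1)).card := by
    intro j hj
    obtain ⟨hjne, hjD⟩ := Finset.mem_erase.mp hj
    rcases lt_or_gt_of_ne hjne with h | h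
    · have hjv : j < v := hP j hjD h
      congr 1
      apply Finset.filter_congr
      intro x hx
      simp only [Finset.mem_Icc] at hx
      have hxv : x ≠ v := by omega
      have hxi : x ≠ i := by omega
      simp [hmem x, hxv, hxi]
    · have hset : (Finset.Icc 1 j).filter (fun k => k ∉ C1)
          = insert i (((Finset.Icc 1 j).filter (fun k => k ∉ D1)).erase v) := by
        ext x
        simp only [Finset.mem_insert, Finset.mem_erase, Finset.mem_filter, Finset.mem_Icc,
          hmem x]
        constructor
        · rintro ⟨⟨h1, h2⟩, h3⟩
          by_cases hxi : x = i
          · exact Or.inl hxi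
          · refine Or.inr ⟨?_, ⟨h1, h2⟩, ?_⟩ <;> tauto
        · rintro (rfl | ⟨hxv, ⟨h1, h2⟩, hxD⟩)
          · refine ⟨⟨by omega, by omega⟩, ?_⟩
            rintro (hcon | ⟨_, hne'⟩)
            · omega
            · exact hne' rfl
          · exact ⟨⟨h1, h2⟩, fun hcon => by tauto⟩
      rw [hset]
      have hvmem : v ∈ (Finset.Icc 1 j).filter (fun k => k ∉ D1) := by
        simp only [Finset.mem_filter, Finset.mem_Icc]
        exact ⟨⟨hv1, by omega⟩, hvD⟩
      have himem : i ∉ ((Finset.Icc 1 j).filter (fun k => k ∉ D1)).erase v := by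
        intro hx
        exact (Finset.mem_filter.mp (Finset.mem_of_mem_erase hx)).2 hiD
      rw [Finset.card_insert_of_notMem himem, Finset.card_erase_of_mem hvmem]
      have := Finset.card_pos.mpr ⟨v, hvmem⟩
      omega
  have claim2 : ((Finset.Icc 1 v).filter (fun k => k ∉ C1)).card + 1
      = ((Finset.Icc 1 i).filter (fun k => k ∉ D1)).card := by
    have h1 : (Finset.Icc 1 i).filter (fun k => k ∉ D1)
        = insert v ((Finset.Icc 1 v).filter (fun k => k ∉ C1)) := by
      ext x
      simp only [Finset.mem_insert, Finset.mem_filter, Finset.mem_Icc, hmem x]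
      constructor
      · rintro ⟨⟨h1, h2⟩, h3⟩
        by_cases hxv : x = v
        · exact Or.inl hxv
        · have hxi : x ≠ i := fun h => h3 (h ▸ hiD)
          refine Or.inr ⟨⟨h1, by omega⟩, ?_⟩
          push_neg
          exact ⟨hxv, fun hx => absurd hx h3⟩
      · rintro (rfl | ⟨⟨h1, h2⟩, h3⟩)
        · exact ⟨⟨hv1, by omega⟩, hvD⟩
        · push_neg at h3
          have hxi : x ≠ i := by omega
          exact ⟨⟨h1, by omega⟩, fun hx => hxi (h3.2 hx)⟩
    have hvnot : v ∉ (Finset.Icc 1 v).filter (fun k => k ∉ C1) := by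
      intro hx
      exact (Finset.mem_filter.mp hx).2 ((hmem v).mpr (Or.inl rfl))
    rw [h1, Finset.card_insert_of_notMem hvnot]
  have hsumC : colRank C1 = ((Finset.Icc 1 v).filter (fun k => k ∉ C1)).card
      + ∑ j ∈ D1.erase i, ((Finset.Icc 1 j).filter (fun k => k ∉ D1)).card := by
    rw [colRank, hC1, Finset.sum_insert hvE]
    congr 1
    exact Finset.sum_congr rfl claim1
  have hsumD : colRank D1 = ((Finset.Icc 1 i).filter (fun k => k ∉ D1)).card
      + ∑ j ∈ D1.erase i, ((Finset.Icc 1 j).filter (fun k => k ∉ D1)).card := by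
    rw [colRank, ← Finset.add_sum_erase _ _ hiD]
  -- the order relation on sorted lists
  have hnd : D1.val.Nodup := D1.nodup
  have hLE : colLE C1 D1 := by
    refine ⟨card_eq, ?_⟩
    have hmul : C1.val = Multiset.map (fun x => if x = i then v else x) D1.val := by
      have h1 : D1.val = i ::ₘ D1.val.erase i := (Multiset.cons_erase hiD).symm
      rw [h1, Multiset.map_cons, if_pos rfl]
      have h2 : Multiset.map (fun x => if x = i then v else x) (D1.val.erase i)
          = D1.val.erase i := by
        rw [Multiset.map_congr rfl (fun x hx => ?_), Multiset.map_id']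
        have : x ≠ i := (hnd.mem_erase_iff.mp hx).1
        simp [this]
      rw [h2, hC1, Finset.insert_val, Finset.erase_val,
        Multiset.ndinsert_of_notMem
          (fun h => hvD (Multiset.mem_of_mem_erase h))]
    have hf : C1.sort (· ≤ ·) = (D1.sort (· ≤ ·)).map (fun x => if x = i then v else x) := by
      refine (fun hp hs => List.Perm.eq_of_pairwise' (Finset.pairwise_sort _ _) hs hp) ?_ ?_
      · rw [← Multiset.coe_eq_coe, Finset.sort_eq, hmul, ← Multiset.map_coe, Finset.sort_eq]
      · rw [List.pairwise_map]
        refine (List.sortedLT_iff_pairwise.mp (Finset.sortedLT_sort D1)).imp_of_mem ?_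
        intro a b ha hb hab
        have haD : a ∈ D1 := (Finset.mem_sort _).mp ha
        have hbD : b ∈ D1 := (Finset.mem_sort _).mp hb
        show (if a = i then v else a) ≤ (if b = i then v else b)
        split_ifs <;>
          first
            | omega
            | exact le_of_lt (hP a haD (by omega))
    intro m hC hS
    have : (C1.sort (· ≤ ·)).get ⟨m, hC⟩
        = if (D1.sort (· ≤ ·)).get ⟨m, hS⟩ = i then v
          else (D1.sort (· ≤ ·)).get ⟨m, hS⟩ := by
      rw [List.get_of_eq hf ⟨m, hC⟩]
      exact List.getElem_map _
    rw [this]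
    split_ifs <;> omega
  refine ⟨C1, hsubC, hLE, by omega⟩
end

section
/- Let D be a diagram with r = rank(D). Then there exists a strictly increasing chain of diagrams C^0 < C^1 < ... < C^{r-1} < D (with respect to the componentwise order on diagrams) such that rank(C^k) = k for each k = 0, 1, ..., r-1. -/
open Finset

/-- Columnwise order on diagrams. -/
def diagLE {n : ℕ} (C D : Fin n → Finset ℕ) : Prop := ∀ j, colLE (C j) (D j)

/-- Strict columnwise order on diagrams. -/
def diagLT {n : ℕ} (C D : Fin n → Finset ℕ) : Prop := diagLE C D ∧ C ≠ D

/-- Rank of a diagram: sum of the ranks of its columns. -/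
def diagRank {n : ℕ} (D : Fin n → Finset ℕ) : ℕ := ∑ j, colRank (D j)

/-- The monomial `x^C`, as the exponent function recording for each row `i`
the number of boxes of `C` in row `i`. -/
def xMon {n : ℕ} (C : Fin n → Finset ℕ) : ℕ → ℕ :=
  fun i => (Finset.univ.filter (fun j => i ∈ C j)).card

/-- The map moving `i` down to `i-1`. -/
private def mv (i : ℕ) : ℕ → ℕ := fun x => if x = i then i - 1 else x

section Col
variable {S : Finset ℕ} {i : ℕ}

private lemma mv_injOn (hi : i ∈ S) (hg : i - 1 ∉ S) : Set.InjOn (mv i) ↑S := by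
  intro x hx y hy hxy
  simp only [mv] at hxy
  split_ifs at hxy with h1 h2 h2
  · omega
  · subst hxy; exact absurd hy hg
  · subst h2; exact absurd (hxy ▸ hx) hg
  · exact hxy

private lemma mem_image_mv (hi : i ∈ S) (hg : i - 1 ∉ S) {k : ℕ} :
    k ∈ S.image (mv i) ↔ (k ∈ S ∧ k ≠ i) ∨ k = i - 1 := by
  simp only [mem_image, mv]
  constructor
  · rintro ⟨y, hy, rfl⟩
    split_ifs with h
    · right; rfl
    · left; exact ⟨hy, h⟩
  · rintro (⟨hk, hki⟩ | rfl)
    · exact ⟨k, hk, if_neg hki⟩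
    · exact ⟨i, hi, if_pos rfl⟩

private lemma sort_image_mv (hi : i ∈ S) (h2 : 2 ≤ i) (hg : i - 1 ∉ S) :
    (S.image (mv i)).sort (· ≤ ·) = (S.sort (· ≤ ·)).map (mv i) := by
  set L := S.sort (· ≤ ·) with hL
  have hmemL : ∀ x ∈ L, x ∈ S := fun x hx => (Finset.mem_sort _).1 hx
  have hslt : L.Pairwise (· < ·) := S.sortedLT_sort.pairwise
  have hmap_lt : (L.map (mv i)).Pairwise (· < ·) := by
    rw [List.pairwise_map]
    refine List.Pairwise.imp_of_mem (fun {a b} ha hb hlt => ?_) hslt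
    have hma : a ∈ S := hmemL _ ha
    have hmb : b ∈ S := hmemL _ hb
    simp only [mv]
    split_ifs with ha hb hb
    · omega
    · omega
    · have : a ≠ i - 1 := fun h => hg (h ▸ hma)
      omega
    · exact hlt
  refine List.Perm.eq_of_pairwise' (Finset.pairwise_sort _ _) (hmap_lt.imp le_of_lt) ?_
  rw [← Multiset.coe_eq_coe]
  have h1 : ((S.image (mv i)).sort (· ≤ ·) : Multiset ℕ) = (S.image (mv i)).val :=
    Finset.sort_eq _ _
  rw [h1, Finset.image_val_of_injOn (mv_injOn hi hg), hL]
  rw [show S.val = ↑(S.sort (· ≤ ·)) from (Finset.sort_eq _ _).symm, Multiset.map_coe]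

private lemma colLE_image_mv (hi : i ∈ S) (h2 : 2 ≤ i) (hg : i - 1 ∉ S) :
    colLE (S.image (mv i)) S := by
  constructor
  · exact Finset.card_image_of_injOn (mv_injOn hi hg)
  · intro k hR hS
    rw [List.get_of_eq (sort_image_mv hi h2 hg)]
    simp only [List.get_eq_getElem, List.getElem_map]
    simp only [mv]
    split_ifs with h
    · rw [h]; omega
    · exact le_refl _

private lemma image_mv_ne (hi : i ∈ S) (h2 : 2 ≤ i) (hg : i - 1 ∉ S) :
    S.image (mv i) ≠ S := by
  intro h
  apply hg
  rw [← h]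
  exact Finset.mem_image.2 ⟨i, hi, by simp [mv]⟩

private lemma colRank_image_mv (hi : i ∈ S) (h2 : 2 ≤ i) (hg : i - 1 ∉ S) :
    colRank (S.image (mv i)) + 1 = colRank S := by
  classical
  have hsum : colRank (S.image (mv i)) =
      ∑ x ∈ S, ((Finset.Icc 1 (mv i x)).filter (fun k => k ∉ S.image (mv i))).card :=
    Finset.sum_image (fun x hx y hy => mv_injOn hi hg hx hy)
  have hmvi : mv i i = i - 1 := if_pos rfl
  have claimA : ∀ x ∈ S.erase i,
      ((Finset.Icc 1 (mv i x)).filter (fun k => k ∉ S.image (mv i))).card =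
      ((Finset.Icc 1 x).filter (fun k => k ∉ S)).card := by
    intro x hx'
    have hx : x ∈ S := Finset.mem_of_mem_erase hx'
    have hxi : x ≠ i := Finset.ne_of_mem_erase hx'
    have hxg : x ≠ i - 1 := fun h => hg (h ▸ hx)
    rw [show mv i x = x from if_neg hxi]
    rcases lt_or_gt_of_ne hxi with hlt | hgt
    · congr 1
      ext k
      simp only [mem_filter, mem_Icc, mem_image_mv hi hg]
      by_cases hkS : k ∈ S
      · have h3 : k ≠ i - 1 := fun h => hg (h ▸ hkS)
        simp [hkS]; omega
      · have h3 : k ≠ i := fun h => hkS (h ▸ hi)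
        simp [hkS]; omega
    · have hAmem : i - 1 ∈ (Finset.Icc 1 x).filter (fun k => k ∉ S) :=
        mem_filter.2 ⟨mem_Icc.2 ⟨by omega, by omega⟩, hg⟩
      have hB : (Finset.Icc 1 x).filter (fun k => k ∉ S.image (mv i)) =
          insert i (((Finset.Icc 1 x).filter (fun k => k ∉ S)).erase (i - 1)) := by
        ext k
        simp only [mem_filter, mem_Icc, mem_insert, mem_erase, mem_image_mv hi hg]
        by_cases hkS : k ∈ S
        · have h3 : k ≠ i - 1 := fun h => hg (h ▸ hkS)
          simp [hkS]; omega
        · have h3 : k ≠ i := fun h => hkS (h ▸ hi)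
          simp [hkS]; omega
      have hnm : i ∉ (((Finset.Icc 1 x).filter (fun k => k ∉ S)).erase (i - 1)) := by
        intro h
        exact (Finset.mem_filter.1 (Finset.mem_of_mem_erase h)).2 hi
      rw [hB, Finset.card_insert_of_notMem hnm, Finset.card_erase_of_mem hAmem]
      have hpos := Finset.card_pos.2 ⟨_, hAmem⟩
      omega
  have claimB : ((Finset.Icc 1 (mv i i)).filter (fun k => k ∉ S.image (mv i))).card + 1 =
      ((Finset.Icc 1 i).filter (fun k => k ∉ S)).card := by
    have hAmem : i - 1 ∈ (Finset.Icc 1 i).filter (fun k => k ∉ S) :=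
      mem_filter.2 ⟨mem_Icc.2 ⟨by omega, by omega⟩, hg⟩
    rw [hmvi]
    have hB : (Finset.Icc 1 (i - 1)).filter (fun k => k ∉ S.image (mv i)) =
        ((Finset.Icc 1 i).filter (fun k => k ∉ S)).erase (i - 1) := by
      ext k
      simp only [mem_filter, mem_Icc, mem_erase, mem_image_mv hi hg]
      by_cases hkS : k ∈ S
      · have h3 : k ≠ i - 1 := fun h => hg (h ▸ hkS)
        simp [hkS]; omega
      · have h3 : k ≠ i := fun h => hkS (h ▸ hi)
        simp [hkS]; omega
    rw [hB, Finset.card_erase_of_mem hAmem]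
    have hpos := Finset.card_pos.2 ⟨_, hAmem⟩
    omega
  have e1 := Finset.sum_erase_add S
    (fun x => ((Finset.Icc 1 (mv i x)).filter (fun k => k ∉ S.image (mv i))).card) hi
  have e2 := Finset.sum_erase_add S
    (fun x => ((Finset.Icc 1 x).filter (fun k => k ∉ S)).card) hi
  have e3 := Finset.sum_congr rfl claimA
  have hcr : colRank S = ∑ x ∈ S, ((Finset.Icc 1 x).filter (fun k => k ∉ S)).card := rfl
  omega

/-- If a column has positive rank, some box can be moved up by one. -/
private lemma exists_movable (h : colRank S ≠ 0) :
    ∃ i ∈ S, 2 ≤ i ∧ i - 1 ∉ S := by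
  classical
  have : ∃ x ∈ S, ((Finset.Icc 1 x).filter (fun k => k ∉ S)).card ≠ 0 := by
    by_contra hcon
    push_neg at hcon
    exact h (Finset.sum_eq_zero hcon)
  set T := S.filter (fun x => ((Finset.Icc 1 x).filter (fun k => k ∉ S)).card ≠ 0) with hT
  have hTne : T.Nonempty := by
    obtain ⟨x, hx, hx2⟩ := this
    exact ⟨x, mem_filter.2 ⟨hx, hx2⟩⟩
  set i := T.min' hTne with hidef
  have hiT : i ∈ T := T.min'_mem hTne
  have hiS : i ∈ S := (mem_filter.1 hiT).1
  obtain ⟨k, hk⟩ := Finset.card_pos.1 (Nat.pos_of_ne_zero (mem_filter.1 hiT).2)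
  rw [mem_filter, mem_Icc] at hk
  obtain ⟨⟨hk1, hk2⟩, hkS⟩ := hk
  have hki : k ≠ i := fun h => hkS (h ▸ hiS)
  have h2 : 2 ≤ i := by omega
  refine ⟨i, hiS, h2, fun hgS => ?_⟩
  -- if i - 1 ∈ S, then i - 1 ∈ T, contradicting minimality
  have hkne : k ≠ i - 1 := fun h => hkS (h ▸ hgS)
  have hmem : i - 1 ∈ T := by
    refine mem_filter.2 ⟨hgS, ?_⟩
    have : k ∈ (Finset.Icc 1 (i - 1)).filter (fun k => k ∉ S) :=
      mem_filter.2 ⟨mem_Icc.2 ⟨hk1, by omega⟩, hkS⟩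
    exact fun hc => by
      have := Finset.card_pos.2 ⟨_, this⟩
      omega
  have := T.min'_le _ hmem
  omega

/-- Column-level step: a column of positive rank can be strictly decreased,
lowering rank by exactly one. -/
private lemma col_step (S : Finset ℕ) (h : colRank S ≠ 0) :
    ∃ S' : Finset ℕ, colLE S' S ∧ S' ≠ S ∧ colRank S' + 1 = colRank S ∧
      ∀ n, S ⊆ Finset.Icc 1 n → S' ⊆ Finset.Icc 1 n := by
  obtain ⟨i, hi, h2, hg⟩ := exists_movable h
  refine ⟨S.image (mv i), colLE_image_mv hi h2 hg, image_mv_ne hi h2 hg,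
    colRank_image_mv hi h2 hg, ?_⟩
  intro n hSn x hx
  rw [mem_image_mv hi hg] at hx
  have hin := mem_Icc.1 (hSn hi)
  rcases hx with ⟨hxS, _⟩ | rfl
  · exact hSn hxS
  · exact mem_Icc.2 ⟨by omega, by omega⟩

end Col

section Diag
variable {n : ℕ}

private lemma colLE_refl (S : Finset ℕ) : colLE S S := ⟨rfl, fun _ _ _ => le_refl _⟩

private lemma colLE_trans {R S T : Finset ℕ} (h1 : colLE R S) (h2 : colLE S T) :
    colLE R T := by
  refine ⟨h1.1.trans h2.1, fun k hR hT => ?_⟩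
  have hS : k < (S.sort (· ≤ ·)).length := by
    rw [Finset.length_sort] at hR ⊢
    rw [← h1.1]; exact hR
  exact le_trans (h1.2 k hR hS) (h2.2 k hS hT)

/-- Diagram-level step. -/
private lemma diag_step (D : Fin n → Finset ℕ) (hD : ∀ j, D j ⊆ Finset.Icc 1 n)
    (h : diagRank D ≠ 0) :
    ∃ C : Fin n → Finset ℕ, (∀ j, C j ⊆ Finset.Icc 1 n) ∧
      diagRank C + 1 = diagRank D ∧ diagLE C D ∧ C ≠ D := by
  classical
  have : ∃ j, colRank (D j) ≠ 0 := by
    by_contra hcon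
    push_neg at hcon
    exact h (Finset.sum_eq_zero (fun j _ => hcon j))
  obtain ⟨j, hj⟩ := this
  obtain ⟨S', hle, hne, hrk, hsub⟩ := col_step (D j) hj
  refine ⟨Function.update D j S', ?_, ?_, ?_, ?_⟩
  · intro j'
    by_cases hjj : j' = j
    · subst hjj; rw [Function.update_self]; exact hsub n (hD j')
    · rw [Function.update_of_ne hjj]; exact hD j'
  · have ha : ∑ j', colRank (Function.update D j S' j') =
        ∑ j', Function.update (fun j'' => colRank (D j'')) j (colRank S') j' := by
      refine Finset.sum_congr rfl (fun j' _ => ?_)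
      by_cases hjj : j' = j
      · subst hjj; rw [Function.update_self, Function.update_self]
      · rw [Function.update_of_ne hjj, Function.update_of_ne hjj]
    have hb := Finset.sum_update_of_mem (Finset.mem_univ j)
      (fun j'' => colRank (D j'')) (colRank S')
    have hc := Finset.add_sum_erase Finset.univ (fun j'' => colRank (D j'')) (Finset.mem_univ j)
    unfold diagRank
    rw [ha, hb, Finset.sdiff_singleton_eq_erase]
    omega
  · intro j'
    by_cases hjj : j' = j
    · subst hjj; rw [Function.update_self]; exact hle
    · rw [Function.update_of_ne hjj]; exact colLE_refl _
  · intro hc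
    apply hne
    have := congrFun hc j
    rwa [Function.update_self] at this

end Diag

section Chain
variable {n : ℕ}

private lemma diagLE_trans {A B C : Fin n → Finset ℕ} (h1 : diagLE A B) (h2 : diagLE B C) :
    diagLE A C := fun j => colLE_trans (h1 j) (h2 j)

private lemma diag_ne_of_rank_lt {A B : Fin n → Finset ℕ} (h : diagRank A < diagRank B) :
    A ≠ B := fun he => absurd (congrArg diagRank he) (ne_of_lt h)

private lemma chain_aux (n : ℕ) : ∀ (r : ℕ) (D : Fin n → Finset ℕ),
    (∀ j, D j ⊆ Finset.Icc 1 n) → diagRank D = r →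
    ∃ C : Fin r → (Fin n → Finset ℕ),
      (∀ k, ∀ j, C k j ⊆ Finset.Icc 1 n) ∧
      (∀ k, diagRank (C k) = (k : ℕ)) ∧
      (∀ k l, k < l → diagLT (C k) (C l)) ∧
      (∀ k, diagLT (C k) D) := by
  intro r
  induction r with
  | zero =>
    intro D hD hr
    exact ⟨Fin.elim0, fun k => k.elim0, fun k => k.elim0, fun k => k.elim0, fun k => k.elim0⟩
  | succ r ih =>
    intro D hD hr
    obtain ⟨C', hC'sub, hC'rk, hC'le, hC'ne⟩ := diag_step D hD (by omega)
    have hC'r : diagRank C' = r := by omega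
    obtain ⟨B, hBsub, hBrk, hBchain, hBlt⟩ := ih C' hC'sub hC'r
    refine ⟨fun k => if h : (k : ℕ) < r then B ⟨k, h⟩ else C', ?_, ?_, ?_, ?_⟩
    · intro k j
      dsimp only
      by_cases h : (k : ℕ) < r
      · rw [dif_pos h]; exact hBsub _ j
      · rw [dif_neg h]; exact hC'sub j
    · intro k
      dsimp only
      by_cases h : (k : ℕ) < r
      · rw [dif_pos h]; exact hBrk _
      · rw [dif_neg h]
        have := k.2
        omega
    · intro k l hkl
      dsimp only
      have hkl' : (k : ℕ) < (l : ℕ) := hkl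
      by_cases hl : (l : ℕ) < r
      · have hk : (k : ℕ) < r := by omega
        rw [dif_pos hk, dif_pos hl]
        exact hBchain ⟨k, hk⟩ ⟨l, hl⟩ (by exact hkl')
      · have hk : (k : ℕ) < r := by have := l.2; omega
        rw [dif_pos hk, dif_neg hl]
        exact hBlt ⟨k, hk⟩
    · intro k
      dsimp only
      by_cases h : (k : ℕ) < r
      · rw [dif_pos h]
        refine ⟨diagLE_trans (hBlt ⟨k, h⟩).1 hC'le, diag_ne_of_rank_lt ?_⟩
        rw [hBrk ⟨k, h⟩]
        omega
      · rw [dif_neg h]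
        exact ⟨hC'le, hC'ne⟩

end Chain

/-- There is a strictly increasing chain `C⁰ < C¹ < ⋯ < C^{r-1} < D`
with `rank(Cᵏ) = k`, where `r = rank(D)`. -/
theorem stmt_1 (n : ℕ) (D : Fin n → Finset ℕ) (hD : ∀ j, D j ⊆ Finset.Icc 1 n) :
    ∃ C : Fin (diagRank D) → (Fin n → Finset ℕ),
      (∀ k, ∀ j, C k j ⊆ Finset.Icc 1 n) ∧
      (∀ k, diagRank (C k) = (k : ℕ)) ∧
      (∀ k l, k < l → diagLT (C k) (C l)) ∧
      (∀ k, diagLT (C k) D) :=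
  chain_aux n (diagRank D) D hD rfl
end

section
/- For any permutation w ∈ S_n with Rothe diagram D(w), the number of 132-patterns in w equals rank(D(w)). Here a 132-pattern is a triple of indices a < b < c with w(a) < w(c) < w(b). -/
open Finset

/-- The Rothe diagram of `w` (0-indexed): `{(i,j) : i < w⁻¹(j), j < w(i)}`. -/
def rothe {n : ℕ} (w : Equiv.Perm (Fin n)) : Finset (Fin n × Fin n) :=
  Finset.univ.filter (fun p => p.1 < w⁻¹ p.2 ∧ p.2 < w p.1)

/-- Rank of a diagram given as a set of boxes (0-indexed):
`Σ_{(i,j) ∈ D} #{k ≤ i : (k,j) ∉ D}`. -/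
def rankF {n : ℕ} (D : Finset (Fin n × Fin n)) : ℕ :=
  ∑ p ∈ D, (Finset.univ.filter (fun k => k ≤ p.1 ∧ (k, p.2) ∉ D)).card

/-- The number of 132-patterns of `w`: triples `a < b < c` with `w a < w c < w b`. -/
def p132 {n : ℕ} (w : Equiv.Perm (Fin n)) : ℕ :=
  (Finset.univ.filter (fun t : Fin n × Fin n × Fin n =>
    t.1 < t.2.1 ∧ t.2.1 < t.2.2 ∧ w t.1 < w t.2.2 ∧ w t.2.2 < w t.2.1)).card

lemma mem_rothe_iff {n : ℕ} (w : Equiv.Perm (Fin n)) (p : Fin n × Fin n) :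
    p ∈ rothe w ↔ p.1 < w⁻¹ p.2 ∧ p.2 < w p.1 := by
  simp [rothe]

/-- The number of 132-patterns of `w` equals the rank of its Rothe diagram. -/
theorem stmt_5 (n : ℕ) (w : Equiv.Perm (Fin n)) : p132 w = rankF (rothe w) := by
  classical
  have hr : rankF (rothe w) = ((rothe w).sigma (fun p =>
      Finset.univ.filter (fun k => k ≤ p.1 ∧ (k, p.2) ∉ rothe w))).card := by
    rw [Finset.card_sigma]; rfl
  rw [p132, hr]
  apply Finset.card_nbij' (i := fun t => ⟨(t.2.1, w t.2.2), t.1⟩)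
    (j := fun s => (s.2, s.1.1, w⁻¹ s.1.2))
  · intro t ht
    simp only [Finset.mem_coe, Finset.mem_filter, Finset.mem_univ, true_and] at ht
    obtain ⟨hab, hbc, hwac, hwcb⟩ := ht
    simp only [Finset.mem_coe, Finset.mem_sigma, mem_rothe_iff, Finset.mem_filter, Finset.mem_univ, true_and,
      Equiv.Perm.coe_inv, Equiv.symm_apply_apply]
    refine ⟨⟨hbc, hwcb⟩, le_of_lt hab, ?_⟩
    rintro ⟨-, h2⟩
    exact absurd hwac (not_lt.mpr (le_of_lt h2))
  · intro s hs
    simp only [Finset.mem_coe, Finset.mem_sigma, mem_rothe_iff, Finset.mem_filter, Finset.mem_univ,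
      true_and] at hs
    obtain ⟨⟨hi, hj⟩, hk, hnot⟩ := hs
    simp only [Finset.mem_coe, Finset.mem_filter, Finset.mem_univ, true_and, Equiv.Perm.coe_inv, Equiv.apply_symm_apply]
    have hki : s.2 < s.1.1 := lt_of_le_of_ne hk (by intro h; rw [h] at hnot; exact hnot ⟨hi, hj⟩)
    have hkinv : s.2 < w⁻¹ s.1.2 := lt_of_le_of_lt hk hi
    have hwk : w s.2 ≤ s.1.2 := by
      by_contra h
      exact hnot ⟨hkinv, lt_of_not_ge h⟩
    have hne : w s.2 ≠ s.1.2 := by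
      intro h
      have : s.2 = w⁻¹ s.1.2 := by rw [← h, Equiv.Perm.coe_inv, Equiv.symm_apply_apply]
      exact absurd this (ne_of_lt hkinv)
    exact ⟨hki, hi, lt_of_le_of_ne hwk hne, hj⟩
  · intro t ht
    simp
  · intro s hs
    simp
end

section
/- For any permutation w ∈ S_n, 132-patterns of w are in bijection with triples (i, j, k) such that (i,j) ∈ D(w), 1 ≤ k < i, and (k,j) ∉ D(w), where D(w) is the Rothe diagram of w. -/
open Finset

/-- 132-patterns of `w` are in bijection with triples `(i,j,k)` with
`(i,j) ∈ D(w)`, `k < i`, and `(k,j) ∉ D(w)`. -/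
theorem stmt_6 (n : ℕ) (w : Equiv.Perm (Fin n)) :
    ∃ f : Fin n × Fin n × Fin n → Fin n × Fin n × Fin n,
      Set.BijOn f
        {t | t.1 < t.2.1 ∧ t.2.1 < t.2.2 ∧ w t.1 < w t.2.2 ∧ w t.2.2 < w t.2.1}
        {t | (t.1, t.2.1) ∈ rothe w ∧ t.2.2 < t.1 ∧ (t.2.2, t.2.1) ∉ rothe w} := by
  refine ⟨fun t => (t.2.1, w t.2.2, t.1),
    Set.InvOn.bijOn (f' := fun t : Fin n × Fin n × Fin n => (t.2.2, t.1, w⁻¹ t.2.1))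
      (f := fun t => (t.2.1, w t.2.2, t.1)) ⟨?_, ?_⟩ ?_ ?_⟩
  · intro t _; simp
  · intro t _; simp
  · rintro ⟨a, b, c⟩ ⟨hab, hbc, hac', hcb'⟩
    refine ⟨?_, hab, ?_⟩
    · rw [mem_rothe_iff]
      exact ⟨by simpa using hbc, hcb'⟩
    · rw [mem_rothe_iff]
      simp only [not_and]
      intro _
      simpa using hac'.le
  · rintro ⟨i, j, k⟩ ⟨hij, hki, hkj⟩
    rw [mem_rothe_iff] at hij hkj
    push_neg at hkj
    simp only [Set.mem_setOf_eq, Equiv.Perm.inv_def, Equiv.apply_symm_apply] at *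
    refine ⟨hki, hij.1, ?_, hij.2⟩
    have h1 : (k : Fin n) < w.symm j := lt_trans hki hij.1
    have h2 := hkj h1
    refine lt_of_le_of_ne h2 ?_
    intro h
    have hk : k = w.symm j := by
      have := congrArg w.symm h
      simpa using this
    exact absurd (hk ▸ h1) (lt_irrefl _)
end

section
/- Let α be a composition and D(α) its skyline diagram, containing the leftmost α_i boxes in row i. Then rank(D(α)) = Σ_{(i,j) ∈ rinv(α)} (α_j − α_i), where rinv(α) is the set of pairs i < j with α_i < α_j. -/
open Finset

/-- Rank of a diagram given as a set of boxes in `[n] × [n]` (1-indexed):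
`Σ_{(i,j) ∈ D} #{k : 1 ≤ k ≤ i, (k,j) ∉ D}`. -/
def rankB (D : Finset (ℕ × ℕ)) : ℕ :=
  ∑ p ∈ D, ((Finset.Icc 1 p.1).filter (fun k => (k, p.2) ∉ D)).card

/-- The skyline diagram of a composition `α` inside `[n] × [n]`: box `(i,j)` iff `j ≤ α i`. -/
def skyline (α : ℕ → ℕ) (n : ℕ) : Finset (ℕ × ℕ) :=
  (Finset.Icc 1 n ×ˢ Finset.Icc 1 n).filter (fun p => p.2 ≤ α p.1)

/-- `rank(D(α)) = Σ_{(i,j) ∈ rinv(α)} (α_j − α_i)`. -/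
theorem stmt_7 (α : ℕ → ℕ) (l n : ℕ) (hl : l ≤ n)
    (hb : ∀ i, α i ≤ n) (h0 : ∀ i, i ∉ Finset.Icc 1 l → α i = 0) :
    rankB (skyline α n) =
      ∑ p ∈ (Finset.Icc 1 n ×ˢ Finset.Icc 1 n).filter
          (fun p => p.1 < p.2 ∧ α p.1 < α p.2), (α p.2 - α p.1) := by
  have hL : rankB (skyline α n)
      = ∑ i ∈ Finset.Icc 1 n, ∑ k ∈ Finset.Icc 1 n,
          (if k ≤ i then α i - α k else 0) := by
    unfold rankB skyline
    rw [Finset.sum_filter, Finset.sum_product]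
    refine Finset.sum_congr rfl fun i hi => ?_
    simp only [Finset.mem_Icc] at hi
    have h1 : ∀ j ∈ Finset.Icc 1 n, (if j ≤ α i then
        (((Finset.Icc 1 i).filter (fun k => (k, j) ∉
          (Finset.Icc 1 n ×ˢ Finset.Icc 1 n).filter (fun p => p.2 ≤ α p.1))).card) else 0)
        = ∑ k ∈ Finset.Icc 1 i, if j ≤ α i ∧ α k < j then 1 else 0 := by
      intro j hj
      simp only [Finset.mem_Icc] at hj
      have hfe : (Finset.Icc 1 i).filter (fun k => (k, j) ∉
          (Finset.Icc 1 n ×ˢ Finset.Icc 1 n).filter (fun p => p.2 ≤ α p.1))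
          = (Finset.Icc 1 i).filter (fun k => α k < j) := by
        apply Finset.filter_congr
        intro k hk
        simp only [Finset.mem_Icc] at hk
        simp only [Finset.mem_filter, Finset.mem_product, Finset.mem_Icc, not_and, not_le,
          eq_iff_iff]
        constructor
        · intro h; exact h ⟨⟨hk.1, le_trans hk.2 hi.2⟩, ⟨hj.1, hj.2⟩⟩
        · intro h _; omega
      rw [hfe, Finset.card_filter]
      split_ifs with h
      · exact Finset.sum_congr rfl fun k _ => by simp [h]
      · symm; apply Finset.sum_eq_zero; intro k _
        simp only [ite_eq_right_iff]; omega
    rw [Finset.sum_congr rfl h1, Finset.sum_comm]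
    have h2 : ∀ k ∈ Finset.Icc 1 i,
        (∑ j ∈ Finset.Icc 1 n, if j ≤ α i ∧ α k < j then 1 else 0) = α i - α k := by
      intro k hk
      rw [← Finset.card_filter]
      have : (Finset.Icc 1 n).filter (fun j => j ≤ α i ∧ α k < j)
          = Finset.Icc (α k + 1) (α i) := by
        ext j
        simp only [Finset.mem_filter, Finset.mem_Icc]
        have := hb i
        omega
      rw [this, Nat.card_Icc]
      omega
    rw [Finset.sum_congr rfl h2]
    rw [show Finset.Icc 1 i = (Finset.Icc 1 n).filter (· ≤ i) by
      ext k; simp only [Finset.mem_filter, Finset.mem_Icc]; omega]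
    rw [Finset.sum_filter]
  have hL' : rankB (skyline α n)
      = ∑ k ∈ Finset.Icc 1 n, ∑ i ∈ Finset.Icc 1 n,
          (if k ≤ i then α i - α k else 0) := by
    rw [hL]; exact Finset.sum_comm
  rw [hL', Finset.sum_filter, Finset.sum_product]
  refine Finset.sum_congr rfl fun a _ => Finset.sum_congr rfl fun b _ => ?_
  dsimp only
  split_ifs with h1 h2 <;> first
    | omega
    | (rcases eq_or_lt_of_le h1 with rfl | hlt <;> omega)
end

section
/- If C and D are diagrams with C ≤ D and C ≠ D, then rank(C) < rank(D). -/
open Finset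

lemma aux_filter_le_card (S : Finset ℕ) (hS : ∀ x ∈ S, 1 ≤ x) (k : Fin S.card) :
    ((Finset.Icc 1 (S.orderEmbOfFin rfl k)).filter (fun x => x ∈ S)).card = (k : ℕ) + 1 := by
  have he : (Finset.Icc 1 (S.orderEmbOfFin rfl k)).filter (fun x => x ∈ S)
      = (Finset.Iic k).image (fun j => S.orderEmbOfFin rfl j) := by
    ext x
    simp only [mem_filter, mem_Icc, mem_image, mem_Iic]
    constructor
    · rintro ⟨⟨-, hx2⟩, hxS⟩
      have : x ∈ Set.range (S.orderEmbOfFin rfl) := by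
        rw [S.range_orderEmbOfFin rfl]; exact hxS
      obtain ⟨j, rfl⟩ := this
      exact ⟨j, (S.orderEmbOfFin rfl).le_iff_le.mp hx2, rfl⟩
    · rintro ⟨j, hj, rfl⟩
      exact ⟨⟨hS _ (S.orderEmbOfFin_mem rfl j), (S.orderEmbOfFin rfl).le_iff_le.mpr hj⟩,
        S.orderEmbOfFin_mem rfl j⟩
  rw [he, Finset.card_image_of_injective _ (S.orderEmbOfFin rfl).injective, Fin.card_Iic]

lemma aux_ge (S : Finset ℕ) (hS : ∀ x ∈ S, 1 ≤ x) (k : Fin S.card) :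
    (k : ℕ) + 1 ≤ S.orderEmbOfFin rfl k := by
  obtain ⟨k, hk⟩ := k
  induction k with
  | zero =>
    simpa using hS _ (S.orderEmbOfFin_mem rfl ⟨0, hk⟩)
  | succ j ih =>
    have hj : j < S.card := Nat.lt_of_succ_lt hk
    have h1 := ih hj
    have h2 : S.orderEmbOfFin rfl ⟨j, hj⟩ < S.orderEmbOfFin rfl ⟨j + 1, hk⟩ :=
      (S.orderEmbOfFin rfl).strictMono (by simp [Fin.lt_def])
    simpa using Nat.lt_of_le_of_lt h1 h2

lemma aux_colRank_eq (S : Finset ℕ) (hS : ∀ x ∈ S, 1 ≤ x) :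
    colRank S = ∑ k : Fin S.card, (S.orderEmbOfFin rfl k - ((k : ℕ) + 1)) := by
  unfold colRank
  rw [← Finset.sum_coe_sort S (fun i => ((Finset.Icc 1 i).filter (fun k => k ∉ S)).card),
    ← Equiv.sum_comp (S.orderIsoOfFin rfl).toEquiv
      (fun i => ((Finset.Icc 1 (i : ℕ)).filter (fun k => k ∉ S)).card)]
  refine Finset.sum_congr rfl fun k _ => ?_
  have hco : ((S.orderIsoOfFin rfl).toEquiv k : ℕ) = S.orderEmbOfFin rfl k :=
    S.coe_orderIsoOfFin_apply rfl k
  rw [hco]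
  have hsplit := Finset.card_filter_add_card_filter_not
    (s := Finset.Icc 1 (S.orderEmbOfFin rfl k)) (p := fun x => x ∈ S)
  have hIcc : (Finset.Icc 1 (S.orderEmbOfFin rfl k)).card = S.orderEmbOfFin rfl k := by
    rw [Nat.card_Icc]; omega
  have := aux_filter_le_card S hS k
  omega

lemma aux_col (R S : Finset ℕ) (hRp : ∀ x ∈ R, 1 ≤ x) (hSp : ∀ x ∈ S, 1 ≤ x)
    (h : colLE R S) : colRank R ≤ colRank S ∧ (R ≠ S → colRank R < colRank S) := by
  obtain ⟨hcard, hget⟩ := h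
  rw [aux_colRank_eq R hRp, aux_colRank_eq S hSp,
    ← Equiv.sum_comp (finCongr hcard) (fun k => S.orderEmbOfFin rfl k - ((k : ℕ) + 1))]
  have key : ∀ k : Fin R.card, R.orderEmbOfFin rfl k ≤ S.orderEmbOfFin rfl (finCongr hcard k) := by
    intro k
    have hkR : (k : ℕ) < (R.sort (· ≤ ·)).length := by
      rw [Finset.length_sort]; exact k.2
    have hkS : (k : ℕ) < (S.sort (· ≤ ·)).length := by
      rw [Finset.length_sort]; exact hcard ▸ k.2
    have := hget k hkR hkS
    rw [Finset.orderEmbOfFin_apply, Finset.orderEmbOfFin_apply]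
    simpa [List.get_eq_getElem] using this
  constructor
  · refine Finset.sum_le_sum fun k _ => ?_
    exact Nat.sub_le_sub_right (by simpa using key k) _
  · intro hne
    refine Finset.sum_lt_sum (fun k _ => Nat.sub_le_sub_right (by simpa using key k) _) ?_
    by_contra hall
    push_neg at hall
    apply hne
    have heq : ∀ k : Fin R.card, R.orderEmbOfFin rfl k = S.orderEmbOfFin rfl (finCongr hcard k) := by
      intro k
      have h1 := hall k (Finset.mem_univ k)
      have h2 := key k
      have h3 := aux_ge R hRp k
      have h4 : (finCongr hcard k : ℕ) = (k : ℕ) := rfl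
      simp only [finCongr_apply, Fin.coe_cast] at h1 h2 ⊢
      omega
    have hsort : R.sort (· ≤ ·) = S.sort (· ≤ ·) := by
      apply List.ext_get (by rw [Finset.length_sort, Finset.length_sort, hcard])
      intro i h1 h2
      have := heq ⟨i, by rwa [Finset.length_sort] at h1⟩
      rw [Finset.orderEmbOfFin_apply, Finset.orderEmbOfFin_apply] at this
      simpa [List.get_eq_getElem] using this
    ext x
    rw [← Finset.mem_sort (α := ℕ) (· ≤ ·), hsort, Finset.mem_sort]

/-- If `C ≤ D` and `C ≠ D` then `rank(C) < rank(D)`. -/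
theorem stmt_11 (n : ℕ) (C D : Fin n → Finset ℕ)
    (hC : ∀ j, C j ⊆ Finset.Icc 1 n) (hD : ∀ j, D j ⊆ Finset.Icc 1 n)
    (hle : diagLE C D) (hne : C ≠ D) : diagRank C < diagRank D := by
  have hCp : ∀ j, ∀ x ∈ C j, 1 ≤ x := fun j x hx => (Finset.mem_Icc.mp (hC j hx)).1
  have hDp : ∀ j, ∀ x ∈ D j, 1 ≤ x := fun j x hx => (Finset.mem_Icc.mp (hD j hx)).1
  obtain ⟨j0, hj0⟩ : ∃ j, C j ≠ D j := by
    by_contra hall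
    push_neg at hall
    exact hne (funext hall)
  refine Finset.sum_lt_sum (fun j _ => (aux_col _ _ (hCp j) (hDp j) (hle j)).1) ⟨j0,
    Finset.mem_univ j0, (aux_col _ _ (hCp j0) (hDp j0) (hle j0)).2 hj0⟩
end

section
/- Let S = {a_1 < ... < a_m} ⊆ [n] with rank((S)) > 0, let k be the largest integer less than a_m with k ∉ S, and let i be such that a_i = k + 1. Then C = (S \ {a_i}) ∪ {k} satisfies C ≤ S, C ≠ S, and rank((C)) = rank((S)) − 1. -/
open Finset

/-- Let `S = {a₁ < ⋯ < a_m}` with `rank((S)) > 0`, let `k` be the largest integer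
less than `a_m` with `k ∉ S`, so that `k + 1 ∈ S`. Then `C = (S \ {k+1}) ∪ {k}`
satisfies `C ≤ S`, `C ≠ S`, and `rank((C)) = rank((S)) − 1`. -/
theorem stmt_18 (n : ℕ) (S : Finset ℕ) (hsub : S ⊆ Finset.Icc 1 n)
    (hne : S.Nonempty) (hr : 0 < colRank S) (k : ℕ)
    (hk1 : k < S.max' hne) (hk2 : k ∉ S)
    (hk3 : ∀ k', k' < S.max' hne → k' ∉ S → k' ≤ k)
    (hk4 : k + 1 ∈ S) :
    colLE (insert k (S.erase (k + 1))) S ∧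
    insert k (S.erase (k + 1)) ≠ S ∧
    colRank (insert k (S.erase (k + 1))) = colRank S - 1 := by
  set C := insert k (S.erase (k + 1)) with hC
  have hkE : k ∉ S.erase (k + 1) := fun h => hk2 (Finset.mem_of_mem_erase h)
  -- k ≥ 1
  have hk0 : 1 ≤ k := by
    rcases Nat.eq_zero_or_pos k with rfl | h
    · exfalso
      have hz : colRank S = 0 := by
        apply Finset.sum_eq_zero
        intro i hi
        rw [Finset.card_eq_zero, Finset.filter_eq_empty_iff]
        intro t ht
        rw [Finset.mem_Icc] at ht
        simp only [not_not]
        by_contra htS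
        have hle : i ≤ S.max' hne := S.le_max' i hi
        rcases lt_or_eq_of_le (le_trans ht.2 hle) with h' | h'
        · have := hk3 t h' htS
          omega
        · exact htS (h' ▸ S.max'_mem hne)
      omega
    · exact h
  have hCmem : ∀ t, t ∈ C ↔ t = k ∨ (t ≠ k + 1 ∧ t ∈ S) := by
    intro t
    simp [hC, Finset.mem_insert, Finset.mem_erase]
  -- cardinality
  have hScard : 1 ≤ S.card := Finset.card_pos.mpr ⟨k + 1, hk4⟩
  have hcard : C.card = S.card := by
    rw [hC, Finset.card_insert_of_notMem hkE, Finset.card_erase_of_mem hk4]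
    omega
  -- the replacement function
  set f : ℕ → ℕ := fun x => if x = k + 1 then k else x with hf
  have himg : S.image f = C := by
    ext t
    simp only [Finset.mem_image, hC, Finset.mem_insert, Finset.mem_erase, hf]
    constructor
    · rintro ⟨s, hs, rfl⟩
      split_ifs with h
      · exact Or.inl rfl
      · exact Or.inr ⟨h, hs⟩
    · rintro (rfl | ⟨h1, h2⟩)
      · exact ⟨t + 1, hk4, by simp⟩
      · exact ⟨t, h2, by simp [h1]⟩
  have hsortS : (S.sort (· ≤ ·)).Pairwise (· < ·) := (Finset.sortedLT_sort S).pairwise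
  have hL : ((S.sort (· ≤ ·)).map f).Pairwise (· < ·) := by
    rw [List.pairwise_map]
    refine hsortS.imp_of_mem ?_
    intro a b ha hb hab
    have haS : a ∈ S := (Finset.mem_sort _).1 ha
    have hbS : b ∈ S := (Finset.mem_sort _).1 hb
    have ha' : a ≠ k := by rintro rfl; exact hk2 haS
    have hb' : b ≠ k := by rintro rfl; exact hk2 hbS
    simp only [hf]
    split_ifs <;> omega
  have hLnd : ((S.sort (· ≤ ·)).map f).Nodup := hL.imp ne_of_lt
  have hLfin : ((S.sort (· ≤ ·)).map f).toFinset = C := by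
    rw [← himg]
    ext t
    simp [List.mem_toFinset, Finset.mem_sort, Finset.mem_image]
  have hsort_eq : C.sort (· ≤ ·) = (S.sort (· ≤ ·)).map f := by
    have hperm : List.Perm (C.sort (· ≤ ·)) ((S.sort (· ≤ ·)).map f) := by
      apply List.perm_of_nodup_nodup_toFinset_eq (Finset.sort_nodup _ _) hLnd
      rw [Finset.sort_toFinset, hLfin]
    exact List.Perm.eq_of_pairwise' (Finset.pairwise_sort _ _)
      (hL.imp le_of_lt) hperm
  refine ⟨⟨hcard, ?_⟩, ?_, ?_⟩
  · -- colLE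
    intro j hR hS'
    simp only [List.get_eq_getElem, hsort_eq, List.getElem_map]
    simp only [hf]
    split_ifs <;> omega
  · -- C ≠ S
    intro h
    exact hk2 (h ▸ Finset.mem_insert_self k _)
  · -- rank
    have hS_ins : S = insert (k + 1) (S.erase (k + 1)) := (Finset.insert_erase hk4).symm
    have hk1E : k + 1 ∉ S.erase (k + 1) := Finset.notMem_erase _ _
    -- terms agree off the swapped element
    have hterm : ∀ i ∈ S.erase (k + 1),
        ((Finset.Icc 1 i).filter (fun t => t ∉ C)).card
          = ((Finset.Icc 1 i).filter (fun t => t ∉ S)).card := by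
      intro i hi
      have hiS : i ∈ S := Finset.mem_of_mem_erase hi
      have hik1 : i ≠ k + 1 := (Finset.mem_erase.1 hi).1
      have hik : i ≠ k := by rintro rfl; exact hk2 hiS
      rcases lt_or_gt_of_ne hik with hlt | hgt
      · -- i < k : the filtered sets coincide
        congr 1
        ext t
        simp only [Finset.mem_filter, Finset.mem_Icc, hCmem]
        constructor
        · rintro ⟨⟨h1, h2⟩, h3⟩
          exact ⟨⟨h1, h2⟩, fun hS0 => h3 (Or.inr ⟨by omega, hS0⟩)⟩
        · rintro ⟨⟨h1, h2⟩, h3⟩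
          refine ⟨⟨h1, h2⟩, ?_⟩
          rintro (rfl | ⟨_, hS0⟩)
          · omega
          · exact h3 hS0
      · -- k + 1 < i
        have hgt' : k + 1 < i := by omega
        have hset : (Finset.Icc 1 i).filter (fun t => t ∉ C)
            = insert (k + 1) (((Finset.Icc 1 i).filter (fun t => t ∉ S)).erase k) := by
          ext t
          simp only [Finset.mem_filter, Finset.mem_Icc, Finset.mem_insert,
            Finset.mem_erase, hCmem]
          constructor
          · rintro ⟨⟨h1, h2⟩, h3⟩
            by_cases htk1 : t = k + 1
            · exact Or.inl htk1
            · refine Or.inr ⟨?_, ⟨h1, h2⟩, ?_⟩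
              · rintro rfl; exact h3 (Or.inl rfl)
              · intro htS; exact h3 (Or.inr ⟨htk1, htS⟩)
          · rintro (rfl | ⟨h1, ⟨h2, h3⟩, h4⟩)
            · refine ⟨⟨by omega, by omega⟩, ?_⟩
              rintro (h | ⟨h, _⟩) <;> omega
            · refine ⟨⟨h2, h3⟩, ?_⟩
              rintro (rfl | ⟨_, hS0⟩)
              · exact h1 rfl
              · exact h4 hS0
        rw [hset]
        have hkmem : k ∈ (Finset.Icc 1 i).filter (fun t => t ∉ S) := by
          simp only [Finset.mem_filter, Finset.mem_Icc]
          exact ⟨⟨hk0, by omega⟩, hk2⟩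
        have hk1nm : k + 1 ∉ ((Finset.Icc 1 i).filter (fun t => t ∉ S)).erase k := by
          intro h
          have := Finset.mem_of_mem_erase h
          simp only [Finset.mem_filter] at this
          exact this.2 hk4
        rw [Finset.card_insert_of_notMem hk1nm, Finset.card_erase_of_mem hkmem]
        have : 1 ≤ ((Finset.Icc 1 i).filter (fun t => t ∉ S)).card :=
          Finset.card_pos.mpr ⟨k, hkmem⟩
        omega
    -- the swapped term
    have hswap : (Finset.Icc 1 k).filter (fun t => t ∉ C)
        = ((Finset.Icc 1 (k + 1)).filter (fun t => t ∉ S)).erase k := by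
      ext t
      simp only [Finset.mem_filter, Finset.mem_Icc, Finset.mem_erase, hCmem]
      constructor
      · rintro ⟨⟨h1, h2⟩, h3⟩
        refine ⟨?_, ⟨h1, by omega⟩, ?_⟩
        · rintro rfl; exact h3 (Or.inl rfl)
        · intro htS; exact h3 (Or.inr ⟨by omega, htS⟩)
      · rintro ⟨h1, ⟨h2, h3⟩, h4⟩
        have htk1 : t ≠ k + 1 := by rintro rfl; exact h4 hk4
        refine ⟨⟨h2, by omega⟩, ?_⟩
        rintro (rfl | ⟨_, hS0⟩)
        · exact h1 rfl
        · exact h4 hS0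
    have hkmem' : k ∈ (Finset.Icc 1 (k + 1)).filter (fun t => t ∉ S) := by
      simp only [Finset.mem_filter, Finset.mem_Icc]
      exact ⟨⟨hk0, by omega⟩, hk2⟩
    have hpos : 1 ≤ ((Finset.Icc 1 (k + 1)).filter (fun t => t ∉ S)).card :=
      Finset.card_pos.mpr ⟨k, hkmem'⟩
    have hCsum : colRank C
        = ((Finset.Icc 1 k).filter (fun t => t ∉ C)).card
          + ∑ i ∈ S.erase (k + 1), ((Finset.Icc 1 i).filter (fun t => t ∉ C)).card := by
      rw [hC, colRank, Finset.sum_insert hkE]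
    have hSsum : colRank S
        = ((Finset.Icc 1 (k + 1)).filter (fun t => t ∉ S)).card
          + ∑ i ∈ S.erase (k + 1), ((Finset.Icc 1 i).filter (fun t => t ∉ S)).card := by
      rw [colRank]
      exact (Finset.add_sum_erase S (fun i => ((Finset.Icc 1 i).filter (fun t => t ∉ S)).card) hk4).symm
    rw [hCsum, hSsum, hswap, Finset.card_erase_of_mem hkmem',
      Finset.sum_congr rfl hterm]
    omega
end
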